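/- arXiv:2206.13723 — 3 statements merged into one kernel-verified Lean document; each statement's English description precedes it below -/
import Mathlib

section
/- Let V : [0,T) → ℝ be nonnegative, differentiable, and satisfy V'(t) = δ₁ V(t) − δ₂ V(t)/𝒞(t), where δ₁ ≥ 0, δ₂ > 0, and 𝒞 : [0,T) → (0,∞) is continuous, monotonically decreasing, with 𝒞(t) → 0 as t → T⁻ and ∫₀ᵀ dt/𝒞(t) = +∞. If δ₂ > δ₁·𝒞(0), then V(t) → 0 as t → T⁻. -/
open Filter Set Topology Real

theorem pt_perturbed_linear_model (T δ₁ δ₂ : ℝ) (V C : ℝ → ℝ) (hT : 0 < T)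
    (hδ₁ : 0 ≤ δ₁) (hδ₂ : 0 < δ₂)
    (hVnn : ∀ t ∈ Set.Ico (0:ℝ) T, 0 ≤ V t)
    (hCcont : ContinuousOn C (Set.Ico 0 T))
    (hCpos : ∀ t ∈ Set.Ico (0:ℝ) T, 0 < C t)
    (hCanti : AntitoneOn C (Set.Ico 0 T))
    (hC0 : Tendsto C (𝓝[<] T) (𝓝 0))
    (hODE : ∀ t ∈ Set.Ico (0:ℝ) T, HasDerivAt V (δ₁ * V t - δ₂ * V t / C t) t)
    (hdiv : Tendsto (fun s : ℝ => ∫ t in (0:ℝ)..s, 1 / C t) (𝓝[<] T) atTop)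
    (hgain : δ₁ * C 0 < δ₂) :
    Tendsto V (𝓝[<] T) (𝓝 0) := by
  set δ' : ℝ := δ₂ - δ₁ * C 0 with hδ'
  have hδ'pos : 0 < δ' := by linarith
  set g : ℝ → ℝ := fun s => ∫ t in (0:ℝ)..s, 1 / C t with hg
  set f : ℝ → ℝ := fun s => 1 / C s with hf
  have hfcont : ContinuousOn f (Set.Ico 0 T) := by
    exact continuousOn_const.div hCcont (fun t ht => (hCpos t ht).ne')
  -- interval integrability of f on [0, t] for t < T
  have hInt : ∀ t ∈ Set.Ico (0:ℝ) T, IntervalIntegrable f MeasureTheory.volume 0 t := by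
    intro t ht
    have hsub : Set.uIcc (0:ℝ) t ⊆ Set.Ico 0 T := by
      rw [Set.uIcc_of_le ht.1]
      exact fun x hx => ⟨hx.1, lt_of_le_of_lt hx.2 ht.2⟩
    exact (hfcont.mono hsub).intervalIntegrable
  -- derivative of g at interior points
  have hgderiv : ∀ t ∈ Set.Ioo (0:ℝ) T, HasDerivAt g (f t) t := by
    intro t ht
    have htI : t ∈ Set.Ico (0:ℝ) T := ⟨ht.1.le, ht.2⟩
    have hopen : IsOpen (Set.Ioo (0:ℝ) T) := isOpen_Ioo
    have hfc : ContinuousOn f (Set.Ioo 0 T) := hfcont.mono Set.Ioo_subset_Ico_self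
    have hca : ContinuousAt f t := hfc.continuousAt (hopen.mem_nhds ht)
    exact intervalIntegral.integral_hasDerivAt_right (hInt t htI)
      (hfc.stronglyMeasurableAtFilter hopen t ht) hca
  -- continuity of g on [0, b] for b < T
  have hgcont : ∀ b ∈ Set.Ico (0:ℝ) T, ContinuousOn g (Set.Icc 0 b) := by
    intro b hb
    have hsub : Set.Icc (0:ℝ) b ⊆ Set.Ico 0 T :=
      fun x hx => ⟨hx.1, lt_of_le_of_lt hx.2 hb.2⟩
    have : MeasureTheory.IntegrableOn f (Set.uIcc 0 b) MeasureTheory.volume := by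
      rw [Set.uIcc_of_le hb.1]
      exact (hfcont.mono hsub).integrableOn_Icc
    have h2 := intervalIntegral.continuousOn_primitive_interval this
    rwa [Set.uIcc_of_le hb.1] at h2
  -- V is continuous on Ico 0 T
  have hVcont : ContinuousOn V (Set.Ico 0 T) := by
    intro t ht
    exact ((hODE t ht).continuousAt).continuousWithinAt
  -- the auxiliary function h = V * exp (δ' * g) is ≤ V 0 on Ico 0 T
  set h : ℝ → ℝ := fun s => V s * Real.exp (δ' * g s) with hh
  have hkey : ∀ t ∈ Set.Ico (0:ℝ) T, V t ≤ V 0 * Real.exp (-(δ' * g t)) := by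
    intro b hb
    have hsub : Set.Icc (0:ℝ) b ⊆ Set.Ico 0 T :=
      fun x hx => ⟨hx.1, lt_of_le_of_lt hx.2 hb.2⟩
    have hanti : AntitoneOn h (Set.Icc 0 b) := by
      apply antitoneOn_of_deriv_nonpos (convex_Icc 0 b)
      · exact (hVcont.mono hsub).mul (((hgcont b hb).const_smul δ').rexp)
      · intro t ht
        rw [interior_Icc] at ht
        have htI : t ∈ Set.Ioo (0:ℝ) T := ⟨ht.1, lt_of_lt_of_le ht.2 (le_of_lt hb.2)⟩
        have htIco : t ∈ Set.Ico (0:ℝ) T := ⟨htI.1.le, htI.2⟩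
        have hd : HasDerivAt h ((δ₁ * V t - δ₂ * V t / C t) * Real.exp (δ' * g t)
            + V t * (Real.exp (δ' * g t) * (δ' * f t))) t :=
          (hODE t htIco).mul (((hgderiv t htI).const_mul δ').exp)
        exact hd.differentiableAt.differentiableWithinAt
      · intro t ht
        rw [interior_Icc] at ht
        have htI : t ∈ Set.Ioo (0:ℝ) T := ⟨ht.1, lt_of_lt_of_le ht.2 (le_of_lt hb.2)⟩
        have htIco : t ∈ Set.Ico (0:ℝ) T := ⟨htI.1.le, htI.2⟩
        have hd : HasDerivAt h ((δ₁ * V t - δ₂ * V t / C t) * Real.exp (δ' * g t)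
            + V t * (Real.exp (δ' * g t) * (δ' * f t))) t :=
          (hODE t htIco).mul (((hgderiv t htI).const_mul δ').exp)
        rw [hd.deriv]
        have hCt : 0 < C t := hCpos t htIco
        have hCle : C t ≤ C 0 := hCanti ⟨le_refl 0, hT⟩ htIco htI.1.le
        have hVt : 0 ≤ V t := hVnn t htIco
        have hE : 0 < Real.exp (δ' * g t) := Real.exp_pos _
        have hfeq : f t = 1 / C t := rfl
        have heq : (δ₁ * V t - δ₂ * V t / C t) * Real.exp (δ' * g t)
            + V t * (Real.exp (δ' * g t) * (δ' * f t))
            = Real.exp (δ' * g t) * V t * (δ₁ * (C t - C 0) / C t) := by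
          rw [hfeq, hδ']
          field_simp
          ring
        rw [heq]
        apply mul_nonpos_of_nonneg_of_nonpos (mul_nonneg hE.le hVt)
        apply div_nonpos_of_nonpos_of_nonneg _ hCt.le
        have : C t - C 0 ≤ 0 := by linarith
        exact mul_nonpos_of_nonneg_of_nonpos hδ₁ this
    have hle : h b ≤ h 0 := hanti (Set.left_mem_Icc.mpr hb.1) (Set.right_mem_Icc.mpr hb.1) hb.1
    have hg0 : g 0 = 0 := intervalIntegral.integral_same
    rw [hh] at hle
    simp only [hg0, mul_zero, Real.exp_zero, mul_one] at hle
    have hE : 0 < Real.exp (-(δ' * g b)) := Real.exp_pos _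
    calc V b = V b * Real.exp (δ' * g b) * Real.exp (-(δ' * g b)) := by
          rw [mul_assoc, ← Real.exp_add]; simp
      _ ≤ V 0 * Real.exp (-(δ' * g b)) := by
          exact mul_le_mul_of_nonneg_right hle hE.le
  -- the bound tends to 0
  have hbound : Tendsto (fun t => V 0 * Real.exp (-(δ' * g t))) (𝓝[<] T) (𝓝 0) := by
    have h1 : Tendsto (fun t => δ' * g t) (𝓝[<] T) atTop :=
      Tendsto.const_mul_atTop hδ'pos hdiv
    have h2 : Tendsto (fun t => -(δ' * g t)) (𝓝[<] T) atBot := tendsto_neg_atTop_atBot.comp h1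
    have h3 : Tendsto (fun t => Real.exp (-(δ' * g t))) (𝓝[<] T) (𝓝 0) :=
      Real.tendsto_exp_atBot.comp h2
    simpa using h3.const_mul (V 0)
  -- eventually in Ico
  have hmem : ∀ᶠ t in 𝓝[<] T, t ∈ Set.Ico (0:ℝ) T := by
    have : Set.Ioo (0:ℝ) T ∈ 𝓝[<] T := Ioo_mem_nhdsLT_of_mem ⟨hT, le_refl T⟩
    filter_upwards [this] with t ht
    exact ⟨ht.1.le, ht.2⟩
  apply tendsto_of_tendsto_of_tendsto_of_le_of_le' tendsto_const_nhds hbound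
  · filter_upwards [hmem] with t ht using hVnn t ht
  · filter_upwards [hmem] with t ht using hkey t ht
end

section
/- Let T > 0, δ₁ ≥ 0, δ₂ > 0, 0 < p < 1, and let 𝒞 : [0,T) → (0,∞) be continuous with ∫₀ᵀ dt/𝒞(t) = +∞ and 𝒞(s) → 0 as s → T⁻. Define V on [0,T) by V(s)^{1−p} = e^{−(1−p)δ₂∫₀ˢ dt/𝒞(t)}·[∫₀ˢ (1−p)δ₁ e^{(1−p)δ₂∫₀ᵗ dx/𝒞(x)} dt + V(0)^{1−p}] with V(0) ≥ 0. Then V(s) → 0 as s → T⁻. -/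
open Filter Set Topology Real

theorem pt_perturbed_sublinear_model (T δ₁ δ₂ p : ℝ) (V C : ℝ → ℝ) (hT : 0 < T)
    (hδ₁ : 0 ≤ δ₁) (hδ₂ : 0 < δ₂) (hp0 : 0 < p) (hp1 : p < 1)
    (hVnn : ∀ t ∈ Set.Ico (0:ℝ) T, 0 ≤ V t)
    (hCcont : ContinuousOn C (Set.Ico 0 T))
    (hCpos : ∀ t ∈ Set.Ico (0:ℝ) T, 0 < C t)
    (hC0 : Tendsto C (𝓝[<] T) (𝓝 0))
    (hdiv : Tendsto (fun s : ℝ => ∫ t in (0:ℝ)..s, 1 / C t) (𝓝[<] T) atTop)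
    (hV : ∀ s ∈ Set.Ico (0:ℝ) T,
      V s ^ (1 - p) =
        Real.exp (-(1 - p) * δ₂ * ∫ t in (0:ℝ)..s, 1 / C t) *
          ((∫ t in (0:ℝ)..s,
              (1 - p) * δ₁ * Real.exp ((1 - p) * δ₂ * ∫ x in (0:ℝ)..t, 1 / C x)) +
            V 0 ^ (1 - p))) :
    Tendsto V (𝓝[<] T) (𝓝 0) := by
  have hp' : (0:ℝ) < 1 - p := by linarith
  set k := (1 - p) * δ₂ with hk
  have hkpos : 0 < k := mul_pos hp' hδ₂
  set I : ℝ → ℝ := fun s => ∫ t in (0:ℝ)..s, 1 / C t with hIdef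
  set g : ℝ → ℝ := fun t => (1 - p) * δ₁ * Real.exp (k * I t) with hgdef
  set J : ℝ → ℝ := fun s => ∫ t in (0:ℝ)..s, g t with hJdef
  set c := V 0 ^ (1 - p) with hcdef
  have hcnn : 0 ≤ c := Real.rpow_nonneg (hVnn 0 ⟨le_refl 0, hT⟩) _
  set W : ℝ → ℝ := fun s => Real.exp (-k * I s) * (J s + c) with hWdef
  -- continuity of 1/C
  have hfC : ContinuousOn (fun t => 1 / C t) (Set.Ico 0 T) :=
    continuousOn_const.div hCcont (fun t ht => (hCpos t ht).ne')
  have hsub : ∀ s ∈ Set.Ico (0:ℝ) T, Set.Icc (0:ℝ) s ⊆ Set.Ico 0 T :=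
    fun s hs t ht => ⟨ht.1, lt_of_le_of_lt ht.2 hs.2⟩
  have hfCint : ∀ s ∈ Set.Ico (0:ℝ) T,
      IntervalIntegrable (fun t => 1 / C t) MeasureTheory.volume 0 s := by
    intro s hs
    apply (hfC.mono ?_).intervalIntegrable
    rw [Set.uIcc_of_le hs.1]
    exact hsub s hs
  -- I continuous on Icc 0 s
  have hIcont : ∀ s ∈ Set.Ico (0:ℝ) T, ContinuousOn I (Set.Icc 0 s) := by
    intro s hs
    have := intervalIntegral.continuousOn_primitive_interval
      (f := fun t => 1 / C t) (a := (0:ℝ)) (b := s) (μ := MeasureTheory.volume) ?_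
    · rwa [Set.uIcc_of_le hs.1] at this
    · rw [Set.uIcc_of_le hs.1]
      exact ((hfC.mono (hsub s hs)).integrableOn_compact isCompact_Icc)
  -- g continuous on Icc 0 s, hence interval integrable
  have hgcont : ∀ s ∈ Set.Ico (0:ℝ) T, ContinuousOn g (Set.Icc 0 s) := by
    intro s hs
    exact continuousOn_const.mul (Real.continuous_exp.comp_continuousOn
      (continuousOn_const.mul (hIcont s hs)))
  have hgint : ∀ s ∈ Set.Ico (0:ℝ) T,
      IntervalIntegrable g MeasureTheory.volume 0 s := by
    intro s hs
    apply (hgcont s hs).mono ?_ |>.intervalIntegrable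
    rw [Set.uIcc_of_le hs.1]
  have hgnn : ∀ t, 0 ≤ g t := fun t => by
    have := Real.exp_pos (k * I t)
    have : (0:ℝ) ≤ (1 - p) * δ₁ := by positivity
    positivity
  have hJnn : ∀ s, 0 ≤ s → 0 ≤ J s := fun s hs =>
    intervalIntegral.integral_nonneg hs (fun u _ => hgnn u)
  -- derivative of I on Ioo 0 T
  have hIoo : Set.Ioo (0:ℝ) T ⊆ Set.Ico 0 T := Set.Ioo_subset_Ico_self
  have hIderiv : ∀ t ∈ Set.Ioo (0:ℝ) T, HasDerivAt I (1 / C t) t := by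
    intro t ht
    apply intervalIntegral.integral_hasDerivAt_right (hfCint t (hIoo ht))
    · exact ContinuousOn.stronglyMeasurableAtFilter isOpen_Ioo (hfC.mono hIoo) t ht
    · exact (hfC.mono hIoo).continuousAt (isOpen_Ioo.mem_nhds ht)
  have hEderiv : ∀ t ∈ Set.Ioo (0:ℝ) T,
      HasDerivAt (fun u => Real.exp (k * I u)) (k * (1 / C t) * Real.exp (k * I t)) t := by
    intro t ht
    have h1 : HasDerivAt (fun u => k * I u) (k * (1 / C t)) t := (hIderiv t ht).const_mul k
    have := h1.exp
    convert this using 1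
    ring
  -- exp(-k I s) * const tends to 0
  have hexp0 : Tendsto (fun s => Real.exp (-k * I s)) (𝓝[<] T) (𝓝 0) := by
    apply Real.tendsto_exp_atBot.comp
    have h1 : Tendsto (fun s => k * I s) (𝓝[<] T) atTop := hdiv.const_mul_atTop hkpos
    have h2 : Tendsto (fun s => -(k * I s)) (𝓝[<] T) atBot := tendsto_neg_atTop_atBot.comp h1
    convert h2 using 2 with s
    ring
  -- main: W → 0
  have hW0 : Tendsto W (𝓝[<] T) (𝓝 0) := by
    rw [Metric.tendsto_nhds]
    intro ε hε
    set M := ε * δ₂ / (2 * (δ₁ + 1)) with hM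
    have hMpos : 0 < M := by positivity
    -- choose s₀
    have hCM : ∀ᶠ t in 𝓝[<] T, C t < M := hC0.eventually (gt_mem_nhds hMpos)
    obtain ⟨a, haT, haP⟩ := mem_nhdsLT_iff_exists_Ioo_subset.mp hCM
    have haT' : a < T := haT
    set s₀ := (max a 0 + T) / 2 with hs₀def
    have hmax : max a 0 < T := max_lt haT' hT
    have hs₀a : a < s₀ := by
      have h1 := le_max_left a 0
      simp only [hs₀def]; linarith
    have hs₀T : s₀ < T := by simp only [hs₀def]; linarith
    have hs₀pos : 0 < s₀ := by
      have h2 := le_max_right a 0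
      simp only [hs₀def]; linarith
    have hs₀Ico : s₀ ∈ Set.Ico (0:ℝ) T := ⟨hs₀pos.le, hs₀T⟩
    -- the vanishing part
    have hA : Tendsto (fun s => Real.exp (-k * I s) * (J s₀ + c)) (𝓝[<] T) (𝓝 0) := by
      have := hexp0.mul_const (J s₀ + c)
      rwa [zero_mul] at this
    have hAsmall : ∀ᶠ s in 𝓝[<] T, Real.exp (-k * I s) * (J s₀ + c) < ε / 2 :=
      hA.eventually (gt_mem_nhds (by linarith))
    have hIooMem : Set.Ioo s₀ T ∈ 𝓝[<] T := Ioo_mem_nhdsLT_of_mem ⟨hs₀T, le_refl T⟩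
    filter_upwards [hAsmall, hIooMem] with s hAs hsI
    have hsIco : s ∈ Set.Ico (0:ℝ) T := ⟨(lt_trans hs₀pos hsI.1).le, hsI.2⟩
    have hs₀s : s₀ ≤ s := hsI.1.le
    have hIccsub : Set.Icc s₀ s ⊆ Set.Icc 0 s := Set.Icc_subset_Icc hs₀pos.le le_rfl
    have hgint2 : IntervalIntegrable g MeasureTheory.volume s₀ s := by
      apply ((hgcont s hsIco).mono ?_).intervalIntegrable
      rw [Set.uIcc_of_le hs₀s]; exact hIccsub
    have hsplit : J s₀ + (∫ t in s₀..s, g t) = J s :=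
      intervalIntegral.integral_add_adjacent_intervals (hgint s₀ hs₀Ico) hgint2
    -- FTC
    have hFint : IntervalIntegrable (fun t => k * (1 / C t) * Real.exp (k * I t))
        MeasureTheory.volume s₀ s := by
      apply ContinuousOn.intervalIntegrable
      rw [Set.uIcc_of_le hs₀s]
      exact (continuousOn_const.mul (hfC.mono (hIccsub.trans (hsub s hsIco)))).mul
        (Real.continuous_exp.comp_continuousOn
          (continuousOn_const.mul ((hIcont s hsIco).mono hIccsub)))
    have hFTC : (∫ t in s₀..s, k * (1 / C t) * Real.exp (k * I t)) =
        Real.exp (k * I s) - Real.exp (k * I s₀) := by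
      apply intervalIntegral.integral_eq_sub_of_hasDerivAt ?_ hFint
      intro t ht
      rw [Set.uIcc_of_le hs₀s] at ht
      exact hEderiv t ⟨lt_of_lt_of_le hs₀pos ht.1, lt_of_le_of_lt ht.2 hsI.2⟩
    -- pointwise bound
    have hpt : ∀ t ∈ Set.Icc s₀ s,
        g t ≤ (δ₁ * M / δ₂) * (k * (1 / C t) * Real.exp (k * I t)) := by
      intro t ht
      have htIco : t ∈ Set.Ico (0:ℝ) T := ⟨le_trans hs₀pos.le ht.1, lt_of_le_of_lt ht.2 hsI.2⟩
      have hCt : 0 < C t := hCpos t htIco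
      have hCtM : C t ≤ M := (haP ⟨lt_of_lt_of_le hs₀a ht.1, lt_of_le_of_lt ht.2 hsI.2⟩).le
      have key : (δ₁ * M / δ₂) * (k * (1 / C t) * Real.exp (k * I t)) =
          ((1 - p) * δ₁ * Real.exp (k * I t)) * (M / C t) := by
        rw [hk]; field_simp
      rw [key]
      exact le_mul_of_one_le_right (by positivity) ((one_le_div hCt).mpr hCtM)
    have hmono : (∫ t in s₀..s, g t) ≤
        ∫ t in s₀..s, (δ₁ * M / δ₂) * (k * (1 / C t) * Real.exp (k * I t)) :=
      intervalIntegral.integral_mono_on hs₀s hgint2 (hFint.const_mul _) hpt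
    have hconst : (∫ t in s₀..s, (δ₁ * M / δ₂) * (k * (1 / C t) * Real.exp (k * I t))) =
        (δ₁ * M / δ₂) * (Real.exp (k * I s) - Real.exp (k * I s₀)) := by
      rw [intervalIntegral.integral_const_mul, hFTC]
    have hdpos : 0 ≤ δ₁ * M / δ₂ := by positivity
    have hdle : δ₁ * M / δ₂ ≤ ε / 2 := by
      have hMeq : δ₁ * M / δ₂ = ε * δ₁ / (2 * (δ₁ + 1)) := by
        rw [hM]; field_simp
      rw [hMeq]
      rw [div_le_div_iff₀ (by positivity) (by norm_num)]
      nlinarith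
    have e1 : Real.exp (-k * I s) * Real.exp (k * I s) = 1 := by
      rw [← Real.exp_add]
      norm_num
    have hexpnn : 0 ≤ Real.exp (-k * I s) := (Real.exp_pos _).le
    have hE0pos : 0 < Real.exp (k * I s₀) := Real.exp_pos _
    have hQle : (∫ t in s₀..s, g t) ≤ (δ₁ * M / δ₂) * (Real.exp (k * I s) - Real.exp (k * I s₀)) := by
      rw [← hconst]; exact hmono
    have hXQ : Real.exp (-k * I s) * (∫ t in s₀..s, g t) ≤ ε / 2 := by
      have h2 := mul_le_mul_of_nonneg_left hQle hexpnn
      nlinarith [mul_pos (Real.exp_pos (-k * I s)) hE0pos]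
    have hWnn : 0 ≤ W s := by
      have := hJnn s hsIco.1
      have := Real.exp_pos (-k * I s)
      simp only [hWdef]
      positivity
    have hWle : W s < ε := by
      have hWs : W s = Real.exp (-k * I s) * (J s₀ + c) +
          Real.exp (-k * I s) * (∫ t in s₀..s, g t) := by
        simp only [hWdef]
        rw [← hsplit]; ring
      rw [hWs]; linarith
    rw [Real.dist_eq, sub_zero, abs_of_nonneg hWnn]
    exact hWle
  -- conclude
  have hmem : Set.Ioo (0:ℝ) T ∈ 𝓝[<] T := Ioo_mem_nhdsLT_of_mem ⟨hT, le_refl T⟩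
  have heq : ∀ᶠ s in 𝓝[<] T, V s = (W s) ^ (1 - p)⁻¹ := by
    filter_upwards [hmem] with s hs
    have hsIco : s ∈ Set.Ico (0:ℝ) T := ⟨hs.1.le, hs.2⟩
    have h1 : V s ^ (1 - p) = W s := by
      have harg : (-(1 - p) * δ₂ * ∫ t in (0:ℝ)..s, 1 / C t) = -k * I s := by
        simp only [hIdef]; rw [hk]; ring
      rw [hV s hsIco, harg]
    rw [← h1, Real.rpow_rpow_inv (hVnn s hsIco) hp'.ne']
  have : Tendsto (fun s => (W s) ^ (1 - p)⁻¹) (𝓝[<] T) (𝓝 0) := by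
    have hc : ContinuousAt (fun x : ℝ => x ^ (1 - p)⁻¹) 0 :=
      Real.continuousAt_rpow_const 0 _ (Or.inr (by positivity))
    have := hc.tendsto.comp hW0
    rwa [Real.zero_rpow (inv_ne_zero hp'.ne')] at this
  exact this.congr' (heq.mono fun s hs => hs.symm)
end

section
/- Let T > 0, H_f > 0, λ < 0, and η > (H_f·T^ℓ + 1)/|λ| with ℓ ≥ 1. Let W : [0,T) → ℝ be nonnegative, differentiable, satisfying W'(t) ≤ 2H_f W(t) + 2λη W(t)/(T−t)^ℓ. Then W(t) → 0 as t → T⁻. -/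
open Filter Set Topology Real

theorem pt_lyapunov_synchronization (T Hf lam η ℓ : ℝ) (W W' : ℝ → ℝ)
    (hT : 0 < T) (hHf : 0 < Hf) (hlam : lam < 0) (hℓ : 1 ≤ ℓ)
    (hη : (Hf * T ^ ℓ + 1) / |lam| < η)
    (hWnn : ∀ t ∈ Set.Ico (0:ℝ) T, 0 ≤ W t)
    (hderiv : ∀ t ∈ Set.Ico (0:ℝ) T, HasDerivAt W (W' t) t)
    (hineq : ∀ t ∈ Set.Ico (0:ℝ) T,
      W' t ≤ 2 * Hf * W t + 2 * lam * η * W t / (T - t) ^ ℓ) :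
    Tendsto W (𝓝[<] T) (𝓝 0) := by
  have hTl1 : (0:ℝ) < T ^ (ℓ - 1) := Real.rpow_pos_of_pos hT _
  set c : ℝ := 2 / T ^ (ℓ - 1) with hc
  have hcpos : 0 < c := by positivity
  -- key pointwise inequality
  have key : ∀ t ∈ Set.Ico (0:ℝ) T, (T - t) * W' t + c * W t ≤ 0 := by
    intro t ht
    obtain ⟨ht0, htT⟩ := ht
    have hs : 0 < T - t := by linarith
    have hsl : 0 < (T - t) ^ ℓ := Real.rpow_pos_of_pos hs _
    have hW := hWnn t ⟨ht0, htT⟩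
    have h1 : lam * η ≤ -(Hf * T ^ ℓ + 1) := by
      have habs : |lam| = -lam := abs_of_neg hlam
      rw [habs] at hη
      have h2 := (div_lt_iff₀ (by linarith : (0:ℝ) < -lam)).mp hη
      nlinarith
    have hTℓpos : (0:ℝ) < T ^ ℓ := Real.rpow_pos_of_pos hT _
    have hTl : (T - t) ^ ℓ ≤ T ^ ℓ :=
      Real.rpow_le_rpow (le_of_lt hs) (by linarith) (by linarith)
    -- W' t * (T-t)^ℓ ≤ -2 * W t
    have h2 : W' t * (T - t) ^ ℓ ≤ -2 * W t := by
      have hi := hineq t ⟨ht0, htT⟩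
      have hi' : W' t * (T - t) ^ ℓ ≤
          2 * Hf * W t * (T - t) ^ ℓ + 2 * lam * η * W t := by
        have := mul_le_mul_of_nonneg_right hi (le_of_lt hsl)
        calc W' t * (T - t) ^ ℓ
            ≤ (2 * Hf * W t + 2 * lam * η * W t / (T - t) ^ ℓ) * (T - t) ^ ℓ := this
          _ = 2 * Hf * W t * (T - t) ^ ℓ + 2 * lam * η * W t := by
              field_simp
      nlinarith [mul_le_mul_of_nonneg_left hTl (by positivity : (0:ℝ) ≤ 2 * Hf * W t), mul_le_mul_of_nonneg_right h1 hW]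
    -- translate to W' t ≤ -2 W t / (T-t)
    have hsl1 : 0 < (T - t) ^ (ℓ - 1) := Real.rpow_pos_of_pos hs _
    have hfac : (T - t) ^ ℓ = (T - t) ^ (ℓ - 1) * (T - t) := by
      rw [← Real.rpow_add_one (ne_of_gt hs) (ℓ - 1)]
      ring_nf
    have hTl' : (T - t) ^ (ℓ - 1) ≤ T ^ (ℓ - 1) :=
      Real.rpow_le_rpow (le_of_lt hs) (by linarith) (by linarith)
    -- (T - t) * W' t ≤ -2 W t / (T-t)^(ℓ-1)
    have h3 : (T - t) * W' t ≤ -2 * W t / (T - t) ^ (ℓ - 1) := by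
      rw [le_div_iff₀ hsl1]
      nlinarith [h2, hfac]
    have h4 : c * W t ≤ 2 * W t / (T - t) ^ (ℓ - 1) := by
      rw [hc, div_mul_eq_mul_div, div_le_div_iff₀ hTl1 hsl1]
      nlinarith
    have h5 : -2 * W t / (T - t) ^ (ℓ - 1) + 2 * W t / (T - t) ^ (ℓ - 1) = 0 := by
      ring
    linarith
  -- the auxiliary function Φ
  set Φ : ℝ → ℝ := fun t => W t * (T - t) ^ (-c) with hΦ
  have hΦderiv : ∀ t ∈ Set.Ico (0:ℝ) T,
      HasDerivAt Φ (W' t * (T - t) ^ (-c) + W t * (-1 * -c * (T - t) ^ (-c - 1))) t := by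
    intro t ht
    have hs : 0 < T - t := by linarith [ht.2]
    have hg : HasDerivAt (fun u : ℝ => T - u) (-1) t := (hasDerivAt_id t).const_sub T
    have hr := hg.rpow_const (p := -c) (Or.inl (ne_of_gt hs))
    exact (hderiv t ht).mul hr
  have hΦanti : AntitoneOn Φ (Set.Ico (0:ℝ) T) := by
    apply antitoneOn_of_deriv_nonpos (convex_Ico 0 T)
    · intro t ht
      exact ((hΦderiv t ht).continuousAt).continuousWithinAt
    · intro t ht
      rw [interior_Ico] at ht
      exact ((hΦderiv t ⟨le_of_lt ht.1, ht.2⟩).differentiableAt).differentiableWithinAt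
    · intro t ht
      rw [interior_Ico] at ht
      have ht' : t ∈ Set.Ico (0:ℝ) T := ⟨le_of_lt ht.1, ht.2⟩
      have hs : 0 < T - t := by linarith [ht.2]
      rw [(hΦderiv t ht').deriv]
      have hk := key t ht'
      have e1 : (T - t) ^ (-c) = (T - t) ^ (-c - 1) * (T - t) := by
        rw [← Real.rpow_add_one (ne_of_gt hs) (-c - 1)]
        ring_nf
      have hp : 0 < (T - t) ^ (-c - 1) := Real.rpow_pos_of_pos hs _
      have : W' t * (T - t) ^ (-c) + W t * (-1 * -c * (T - t) ^ (-c - 1))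
          = (T - t) ^ (-c - 1) * ((T - t) * W' t + c * W t) := by
        rw [e1]; ring
      rw [this]
      exact mul_nonpos_of_nonneg_of_nonpos (le_of_lt hp) hk
  have h0mem : (0:ℝ) ∈ Set.Ico (0:ℝ) T := ⟨le_refl 0, hT⟩
  have hbound : ∀ t ∈ Set.Ico (0:ℝ) T, W t ≤ Φ 0 * (T - t) ^ c := by
    intro t ht
    have hs : 0 < T - t := by linarith [ht.2]
    have hΦle : Φ t ≤ Φ 0 := hΦanti h0mem ht ht.1
    have hWt : W t = Φ t * (T - t) ^ c := by
      rw [hΦ]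
      simp only []
      rw [mul_assoc, ← Real.rpow_add hs]
      simp
    rw [hWt]
    exact mul_le_mul_of_nonneg_right hΦle (Real.rpow_nonneg (le_of_lt hs) c)
  -- squeeze
  have hmem : Set.Ioo (0:ℝ) T ∈ 𝓝[<] T := Ioo_mem_nhdsLT_of_mem ⟨hT, le_refl T⟩
  have hg : Tendsto (fun t => Φ 0 * (T - t) ^ c) (𝓝[<] T) (𝓝 0) := by
    have h1 : Tendsto (fun t : ℝ => T - t) (𝓝[<] T) (𝓝 0) := by
      have : Tendsto (fun t : ℝ => T - t) (𝓝 T) (𝓝 (T - T)) :=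
        (continuous_const.sub continuous_id).tendsto T
      simpa using this.mono_left nhdsWithin_le_nhds
    have h2 : Tendsto (fun x : ℝ => x ^ c) (𝓝 0) (𝓝 0) := by
      have := (Real.continuousAt_rpow_const 0 c (Or.inr hcpos.le)).tendsto
      simpa [Real.zero_rpow (ne_of_gt hcpos)] using this
    have h3 := h2.comp h1
    have := h3.const_mul (Φ 0)
    simpa using this
  apply squeeze_zero'
  · filter_upwards [hmem] with t ht
    exact hWnn t ⟨le_of_lt ht.1, ht.2⟩
  · filter_upwards [hmem] with t ht
    exact hbound t ⟨le_of_lt ht.1, ht.2⟩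
  · exact hg
end
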